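/- With the Lie derivative on Berezinian sections defined by L_X[η⊗P] = (−1)^{|X||η⊗P|+1}[η⊗P∘X], one has the Leibniz rule L_X(ξ·a) = L_X(ξ)·a + (−1)^{|X||ξ|} ξ·X(a) for homogeneous graded vector fields X, homogeneous Berezinian sections ξ, and homogeneous a in the graded algebra A. -/
import Mathlib

lemma neg_one_pow_zmod_add (u v : ZMod 2) :
    ((-1 : ℝ) ^ ((u + v).val)) = (-1) ^ u.val * (-1) ^ v.val := by
  rw [ZMod.val_add, ← neg_one_pow_eq_pow_mod_two, pow_add]

/-- **Leibniz rule for the Lie derivative on Berezinian sections.**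

`A` is a ℤ₂-graded commutative algebra (graded by `𝒜`), and Berezinian sections are
classes `ξ = [η⊗P]` of `m`-form-valued differential operators modulo a submodule `K`;
we represent such a section by its operator part `P : A →ₗ[ℝ] A` of parity `q` in the
quotient `(A →ₗ[ℝ] A) ⧸ K`.  The right `A`-action is `[P]·a = [P ∘ (a·)]` and the Lie
derivative along a homogeneous vector field `X` of parity `px` is
`L_X [P] = (−1)^{px·|P| + 1} [P ∘ X]`.  Then for homogeneous `a ∈ 𝒜 pa`:
`L_X(ξ·a) = L_X(ξ)·a + (−1)^{px q} ξ·X(a)`, i.e. the Leibniz rule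
`L_X(ξ·a) = L_X(ξ)·a + (−1)^{|X||ξ|} ξ·X(a)`. -/
theorem berezinian_lie_derivative_leibniz
    {A : Type*} [Ring A] [Algebra ℝ A]
    (𝒜 : ZMod 2 → Submodule ℝ A)
    (K : Submodule ℝ (A →ₗ[ℝ] A))
    (X : A →ₗ[ℝ] A) (px : ZMod 2)
    (hX : ∀ (i : ZMod 2) (c b : A), c ∈ 𝒜 i →
      X (c * b) = X c * b + ((-1 : ℝ) ^ (px * i).val) • (c * X b))
    (P : A →ₗ[ℝ] A) (q : ZMod 2)
    (a : A) (pa : ZMod 2) (ha : a ∈ 𝒜 pa) :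
    Submodule.Quotient.mk (p := K)
        (((-1 : ℝ) ^ ((px * (q + pa)).val + 1)) •
          ((P ∘ₗ LinearMap.mulLeft ℝ a) ∘ₗ X)) =
      Submodule.Quotient.mk (p := K)
          ((((-1 : ℝ) ^ ((px * q).val + 1)) • (P ∘ₗ X)) ∘ₗ LinearMap.mulLeft ℝ a) +
        Submodule.Quotient.mk (p := K)
          (((-1 : ℝ) ^ (px * q).val) • (P ∘ₗ LinearMap.mulLeft ℝ (X a))) := by
  rw [← Submodule.Quotient.mk_add]
  congr 1
  ext b
  simp only [LinearMap.add_apply, LinearMap.smul_apply, LinearMap.comp_apply,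
    LinearMap.mulLeft_apply]
  rw [hX pa a b ha, map_add, map_smul, mul_add, pow_succ, pow_succ, neg_one_pow_zmod_add]
  module
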